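/- Let Ω ⊆ P(ℝ^{d+1}) be a proper domain (open, connected, bounded in an affine chart) and define for x, y ∈ Ω: c_Ω(x,y) = sup{H_I(f(x), f(y)) : f ∈ Proj(Ω, I)}, where Proj(Ω,I) is the set of restrictions to Ω of projective maps T ∈ P(Lin(ℝ^{d+1}, ℝ²)) with ker T ∩ Ω = ∅ and T(Ω) ⊆ I. Then c_Ω(x,y) = C_Ω(x,y), where C_Ω(x,y) = sup over [ξ],[η] ∈ Ω* of (1/2)|log|ξ(x)η(y)/(ξ(y)η(x))|| and Ω* = {[f] ∈ P(ℝ^{(d+1)*}) : f(x) ≠ 0 ∀ [x] ∈ Ω}. -/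

import Mathlib

open scoped LinearAlgebra.Projectivization
open Projectivization

/-- The quotient topology on a projectivization. -/
instance projTopology {K V : Type*} [DivisionRing K] [AddCommGroup V] [Module K V]
    [TopologicalSpace V] : TopologicalSpace (ℙ K V) :=
  inferInstanceAs (TopologicalSpace (Quotient (projectivizationSetoid K V)))

/-- The (1/2-normalized) Hilbert metric on the interval `I = {[1:x] : |x| < 1} ⊂ P(ℝ²)`,
expressed through the functionals `ξ₁(v) = v₀ + v₁`, `ξ₂(v) = v₀ − v₁` vanishing at the
endpoints of `I`; this is scale-invariant in each argument. -/
noncomputable def hilbertI (u w : Fin 2 → ℝ) : ℝ :=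
  (1/2) * |Real.log (abs (((u 0 + u 1) * (w 0 - w 1)) / ((w 0 + w 1) * (u 0 - u 1))))|

lemma aux_abs_sub_lt {a b : ℝ} (h : 0 < a * b) : |a - b| < |a + b| := by
  rcases abs_cases (a - b) with ⟨h1, h2⟩ | ⟨h1, h2⟩ <;>
    rcases abs_cases (a + b) with ⟨h3, h4⟩ | ⟨h3, h4⟩ <;> nlinarith

lemma aux_rep_sign {d : ℕ} (f g : StrongDual ℝ (Fin (d+1) → ℝ))
    (v : Fin (d+1) → ℝ) (hv : v ≠ 0) :
    (0 < f ((Projectivization.mk ℝ v hv).rep) * g ((Projectivization.mk ℝ v hv).rep)) ↔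
      0 < f v * g v := by
  obtain ⟨a, ha⟩ := (Projectivization.mk_eq_mk_iff ℝ _ v _ hv).mp
    (Projectivization.mk_rep (Projectivization.mk ℝ v hv))
  rw [← ha, Units.smul_def, map_smul, map_smul, smul_eq_mul, smul_eq_mul]
  have ha2 : (0:ℝ) < (a:ℝ)^2 :=
    lt_of_le_of_ne (sq_nonneg _) (Ne.symm (pow_ne_zero 2 a.ne_zero))
  constructor <;> intro h <;> nlinarith


/-- Let `Ω ⊆ P(ℝ^{d+1})` be a proper domain.  Then Kobayashi's
Carathéodory-type metric `c_Ω(x,y) = sup {H_I(f(x), f(y)) : f ∈ Proj(Ω, I)}` — the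
supremum over projective maps `T : ℝ^{d+1} → ℝ²` with `ker T ∩ Ω = ∅` and `T(Ω) ⊆ I` —
coincides with `C_Ω(x,y) = sup_{[ξ],[η] ∈ Ω*} (1/2)|log|ξ(x)η(y)/(ξ(y)η(x))||`. -/
theorem stmt_17 (d : ℕ)
    (Ω : Set (ℙ ℝ (Fin (d+1) → ℝ))) (hopen : IsOpen Ω) (hconn : IsConnected Ω)
    (hproper : ∃ η : StrongDual ℝ (Fin (d+1) → ℝ), η ≠ 0 ∧
      ∀ z ∈ closure Ω, η (Projectivization.rep z) ≠ 0)
    (x y : ℙ ℝ (Fin (d+1) → ℝ)) (hx : x ∈ Ω) (hy : y ∈ Ω) :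
    sSup {r : ℝ | ∃ T : (Fin (d+1) → ℝ) →ₗ[ℝ] (Fin 2 → ℝ),
        (∀ z ∈ Ω, T (Projectivization.rep z) ≠ 0) ∧
        (∀ z ∈ Ω, |(T (Projectivization.rep z)) 1| < |(T (Projectivization.rep z)) 0|) ∧
        r = hilbertI (T (Projectivization.rep x)) (T (Projectivization.rep y))} =
    sSup {r : ℝ | ∃ f g : StrongDual ℝ (Fin (d+1) → ℝ),
        (∀ z ∈ Ω, f (Projectivization.rep z) ≠ 0) ∧
        (∀ z ∈ Ω, g (Projectivization.rep z) ≠ 0) ∧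
        r = (1/2) * |Real.log (abs ((f (Projectivization.rep x) * g (Projectivization.rep y)) /
              (f (Projectivization.rep y) * g (Projectivization.rep x))))|} := by
  -- constant sign of f·g on Ω
  have hsign : ∀ f g : StrongDual ℝ (Fin (d+1) → ℝ),
      (∀ z ∈ Ω, f (Projectivization.rep z) ≠ 0) →
      (∀ z ∈ Ω, g (Projectivization.rep z) ≠ 0) →
      (∀ z ∈ Ω, 0 < f (Projectivization.rep z) * g (Projectivization.rep z)) ∨
      (∀ z ∈ Ω, f (Projectivization.rep z) * g (Projectivization.rep z) < 0) := by
    intro f g hf hg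
    set U : Set (ℙ ℝ (Fin (d+1) → ℝ)) :=
      {z | 0 < f (Projectivization.rep z) * g (Projectivization.rep z)} with hU
    set V : Set (ℙ ℝ (Fin (d+1) → ℝ)) :=
      {z | f (Projectivization.rep z) * g (Projectivization.rep z) < 0} with hV
    have hqm : Topology.IsQuotientMap (Quotient.mk (projectivizationSetoid ℝ (Fin (d+1) → ℝ))) :=
      isQuotientMap_quot_mk
    have hcont : Continuous (fun v : {v : Fin (d+1) → ℝ // v ≠ 0} => f v.1 * g v.1) :=
      (f.continuous.comp continuous_subtype_val).mul (g.continuous.comp continuous_subtype_val)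
    have hpre : ∀ v : {v : Fin (d+1) → ℝ // v ≠ 0},
        Quotient.mk (projectivizationSetoid ℝ (Fin (d+1) → ℝ)) v =
          Projectivization.mk ℝ v.1 v.2 := fun v => rfl
    have hUopen : IsOpen U := by
      refine hqm.isOpen_preimage.mp ?_
      have : Quotient.mk (projectivizationSetoid ℝ (Fin (d+1) → ℝ)) ⁻¹' U =
          (fun v : {v : Fin (d+1) → ℝ // v ≠ 0} => f v.1 * g v.1) ⁻¹' Set.Ioi 0 := by
        ext v
        simp only [Set.mem_preimage, hU, Set.mem_setOf_eq, Set.mem_Ioi, hpre v]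
        exact aux_rep_sign f g v.1 v.2
      rw [this]
      exact hcont.isOpen_preimage _ isOpen_Ioi
    have hVopen : IsOpen V := by
      refine hqm.isOpen_preimage.mp ?_
      have : Quotient.mk (projectivizationSetoid ℝ (Fin (d+1) → ℝ)) ⁻¹' V =
          (fun v : {v : Fin (d+1) → ℝ // v ≠ 0} => f v.1 * g v.1) ⁻¹' Set.Iio 0 := by
        ext v
        simp only [Set.mem_preimage, hV, Set.mem_setOf_eq, Set.mem_Iio, hpre v]
        have h1 := aux_rep_sign f g v.1 v.2
        have h2 := aux_rep_sign (-f) g v.1 v.2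
        simp only [ContinuousLinearMap.neg_apply, neg_mul, neg_pos] at h2
        exact h2
      rw [this]
      exact hcont.isOpen_preimage _ isOpen_Iio
    have hdisj : Disjoint U V := by
      rw [Set.disjoint_left]
      intro z hzU hzV
      exact lt_irrefl (0:ℝ) (hzU.trans hzV)
    have hsub : Ω ⊆ U ∪ V := by
      intro z hz
      rcases lt_or_gt_of_ne (mul_ne_zero (hf z hz) (hg z hz)) with h | h
      · exact Or.inr h
      · exact Or.inl h
    rcases hconn.isPreconnected.subset_or_subset hUopen hVopen hdisj hsub with h | h
    · exact Or.inl fun z hz => h hz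
    · exact Or.inr fun z hz => h hz
  congr 1
  ext r
  simp only [Set.mem_setOf_eq]
  constructor
  · rintro ⟨T, hT0, hTI, rfl⟩
    refine ⟨LinearMap.toContinuousLinearMap
        (((LinearMap.proj (R := ℝ) (φ := fun _ : Fin 2 => ℝ) 0) + (LinearMap.proj (R := ℝ) (φ := fun _ : Fin 2 => ℝ) 1)) ∘ₗ T),
      LinearMap.toContinuousLinearMap
        (((LinearMap.proj (R := ℝ) (φ := fun _ : Fin 2 => ℝ) 0) - (LinearMap.proj (R := ℝ) (φ := fun _ : Fin 2 => ℝ) 1)) ∘ₗ T), ?_, ?_, ?_⟩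
    · intro z hz
      simp only [LinearMap.coe_toContinuousLinearMap', LinearMap.comp_apply,
        LinearMap.add_apply, LinearMap.proj_apply]
      intro h
      have h2 := hTI z hz
      have h3 : T (Projectivization.rep z) 1 = -(T (Projectivization.rep z) 0) := by linarith
      rw [h3, abs_neg] at h2
      exact lt_irrefl _ h2
    · intro z hz
      simp only [LinearMap.coe_toContinuousLinearMap', LinearMap.comp_apply,
        LinearMap.sub_apply, LinearMap.proj_apply]
      intro h
      have h2 := hTI z hz
      have h3 : T (Projectivization.rep z) 1 = T (Projectivization.rep z) 0 := by linarith
      rw [h3] at h2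
      exact lt_irrefl _ h2
    · simp only [LinearMap.coe_toContinuousLinearMap', LinearMap.comp_apply,
        LinearMap.add_apply, LinearMap.sub_apply, LinearMap.proj_apply, hilbertI]
  · rintro ⟨f, g, hf, hg, rfl⟩
    rcases hsign f g hf hg with hpos | hneg
    · refine ⟨LinearMap.pi ![((f + g : StrongDual ℝ _) : (Fin (d+1) → ℝ) →ₗ[ℝ] ℝ),
        ((f - g : StrongDual ℝ _) : (Fin (d+1) → ℝ) →ₗ[ℝ] ℝ)], ?_, ?_, ?_⟩
      · intro z hz h
        have h0 := congrFun h 0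
        have h1 := congrFun h 1
        simp only [LinearMap.pi_apply, Matrix.cons_val_zero, Matrix.cons_val_one,
          Matrix.head_cons, ContinuousLinearMap.coe_coe, ContinuousLinearMap.add_apply,
          ContinuousLinearMap.sub_apply, Pi.zero_apply] at h0 h1
        have := hpos z hz
        nlinarith
      · intro z hz
        simp only [LinearMap.pi_apply, Matrix.cons_val_zero, Matrix.cons_val_one,
          Matrix.head_cons, ContinuousLinearMap.coe_coe, ContinuousLinearMap.add_apply,
          ContinuousLinearMap.sub_apply]
        exact aux_abs_sub_lt (hpos z hz)
      · simp only [hilbertI, LinearMap.pi_apply, Matrix.cons_val_zero, Matrix.cons_val_one,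
          Matrix.head_cons, ContinuousLinearMap.coe_coe, ContinuousLinearMap.add_apply,
          ContinuousLinearMap.sub_apply]
        congr 2
        ring
    · refine ⟨LinearMap.pi ![((f - g : StrongDual ℝ _) : (Fin (d+1) → ℝ) →ₗ[ℝ] ℝ),
        ((f + g : StrongDual ℝ _) : (Fin (d+1) → ℝ) →ₗ[ℝ] ℝ)], ?_, ?_, ?_⟩
      · intro z hz h
        have h0 := congrFun h 0
        have h1 := congrFun h 1
        simp only [LinearMap.pi_apply, Matrix.cons_val_zero, Matrix.cons_val_one,
          Matrix.head_cons, ContinuousLinearMap.coe_coe, ContinuousLinearMap.add_apply,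
          ContinuousLinearMap.sub_apply, Pi.zero_apply] at h0 h1
        have := hneg z hz
        nlinarith
      · intro z hz
        simp only [LinearMap.pi_apply, Matrix.cons_val_zero, Matrix.cons_val_one,
          Matrix.head_cons, ContinuousLinearMap.coe_coe, ContinuousLinearMap.add_apply,
          ContinuousLinearMap.sub_apply]
        have h := hneg z hz
        have : 0 < f (Projectivization.rep z) * (-(g (Projectivization.rep z))) := by nlinarith
        have h2 := aux_abs_sub_lt this
        rw [sub_neg_eq_add, ← sub_eq_add_neg] at h2
        exact h2
      · simp only [hilbertI, LinearMap.pi_apply, Matrix.cons_val_zero, Matrix.cons_val_one,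
          Matrix.head_cons, ContinuousLinearMap.coe_coe, ContinuousLinearMap.add_apply,
          ContinuousLinearMap.sub_apply]
        congr 2
        ring
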